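/- Let Γ be a subgroup of SL(2,ℝ) that has bounded geometry below some a > 0, and suppose the quotient surface Γ\ℍ is coarsely tame. Then for every g₀ ∈ SL(2,ℝ), either the set {γ·g₀·u(s) : γ ∈ Γ, s ∈ ℝ} is dense in SL(2,ℝ) (equivalently, the horocycle orbit of the point Γg₀ of the unit tangent bundle Γ\SL(2,ℝ) is dense), or there exists a real number t₀ > 0 such that g₀·d(t₀) lies in the closure of {γ·g₀·u(s) : γ ∈ Γ, s ∈ ℝ}. -/

import Mathlib

open Matrix Real
open scoped MatrixGroups UpperHalfPlane

/-- The diagonal matrix `d(t)` generating the geodesic flow. -/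
noncomputable def dMat (t : ℝ) : SL(2, ℝ) :=
  ⟨!![Real.exp (t / 2), 0; 0, Real.exp (-(t / 2))], by
    simp [Matrix.det_fin_two_of, ← Real.exp_add]⟩

/-- The unipotent matrix `u(s)` generating the horocycle flow. -/
noncomputable def uMat (s : ℝ) : SL(2, ℝ) :=
  ⟨!![1, s; 0, 1], by simp [Matrix.det_fin_two_of]⟩

/-- The matrix topology on `SL(2,ℝ)`, induced from the space of matrices. -/
instance : TopologicalSpace SL(2, ℝ) :=
  TopologicalSpace.induced (fun g => (g : Matrix (Fin 2) (Fin 2) ℝ)) inferInstance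

/-- The element `-1` of `SL(2,ℝ)`. -/
def negOne : SL(2, ℝ) := ⟨!![-1, 0; 0, -1], by norm_num [Matrix.det_fin_two_of]⟩

/-- The translation length `ℓ(γ) = inf {dist(z, γ·z) : z ∈ ℍ}`. -/
noncomputable def transLen (γ : SL(2, ℝ)) : ℝ := ⨅ z : ℍ, dist z (γ • z)

/-- The set `{γ·g₀·u(s) : γ ∈ Γ, s ∈ ℝ}`, i.e. the lift to `SL(2,ℝ)` of the horocycle
orbit of the point `Γg₀` of `Γ\SL(2,ℝ)`. -/
def horoSat (Γ : Subgroup SL(2, ℝ)) (g₀ : SL(2, ℝ)) : Set SL(2, ℝ) :=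
  {x | ∃ γ ∈ Γ, ∃ s : ℝ, x = γ * g₀ * uMat s}

/-- The geodesic ray determined by `g`: `r_g(t) = (g·d(t))·i ∈ ℍ`. -/
noncomputable def ray (g : SL(2, ℝ)) (t : ℝ) : ℍ := (g * dMat t) • UpperHalfPlane.I

/-- `Γ` has bounded geometry below `a`: every nontrivial element of `Γ` moves every point
of `ℍ` at distance at least `a`. -/
def BoundedGeomBelow (Γ : Subgroup SL(2, ℝ)) (a : ℝ) : Prop :=
  ∀ (z : ℍ) (γ : SL(2, ℝ)), γ ∈ Γ → γ ≠ 1 → γ ≠ negOne → a ≤ dist z (γ • z)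

/-- The quotient surface `Γ\ℍ` is coarsely tame: it is noncompact and there is `b > 0`
such that every geodesic ray either stays in a compact region of the quotient or meets
closed geodesics of length at most `b` at arbitrarily large times. -/
def CoarselyTame (Γ : Subgroup SL(2, ℝ)) : Prop :=
  (¬ ∃ K : Set ℍ, IsCompact K ∧ ∀ z : ℍ, ∃ γ ∈ Γ, γ • z ∈ K) ∧
    ∃ b > 0, ∀ g : SL(2, ℝ),
      (∃ K : Set ℍ, IsCompact K ∧ ∀ t ≥ (0 : ℝ), ∃ γ ∈ Γ, γ • ray g t ∈ K) ∨
      (∀ T : ℝ, ∃ t ≥ T, ∃ γ ∈ Γ, γ ≠ 1 ∧ γ ≠ negOne ∧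
        dist (ray g t) (γ • ray g t) = transLen γ ∧ transLen γ ≤ b)

open Filter Topology

abbrev M2 := Matrix (Fin 2) (Fin 2) ℝ

lemma dMat_coe (t : ℝ) : (dMat t : M2) = !![Real.exp (t/2), 0; 0, Real.exp (-(t/2))] := rfl

lemma uMat_coe (s : ℝ) : (uMat s : M2) = !![1, s; 0, 1] := rfl

lemma dMat_mul (t s : ℝ) : dMat t * dMat s = dMat (t + s) := by
  apply Subtype.ext
  rw [Matrix.SpecialLinearGroup.coe_mul, dMat_coe, dMat_coe, dMat_coe, Matrix.mul_fin_two]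
  have h1 : t/2 + s/2 = (t+s)/2 := by ring
  have h2 : (-(t/2)) + (-(s/2)) = -((t+s)/2) := by ring
  norm_num [← Real.exp_add, h1, h2]

lemma dMat_zero : dMat 0 = 1 := by
  apply Subtype.ext
  rw [dMat_coe]
  norm_num [Real.exp_zero]
  rw [Matrix.one_fin_two]

lemma dMat_inv (t : ℝ) : (dMat t)⁻¹ = dMat (-t) := by
  apply inv_eq_of_mul_eq_one_right
  rw [dMat_mul]
  simp [dMat_zero]

lemma tendsto_mat {l : Filter ℕ} {f : ℕ → M2} {A : M2}
    (h : ∀ i j, Tendsto (fun n => f n i j) l (𝓝 (A i j))) : Tendsto f l (𝓝 A) :=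
  tendsto_pi_nhds.2 fun i => tendsto_pi_nhds.2 fun j => h i j

lemma tendsto_sl2 {l : Filter ℕ} {f : ℕ → SL(2,ℝ)} {x : SL(2,ℝ)}
    (h : Tendsto (fun n => ((f n : M2))) l (𝓝 (x : M2))) : Tendsto f l (𝓝 x) := by
  have hn : (𝓝 x : Filter SL(2,ℝ))
      = Filter.comap (fun g : SL(2,ℝ) => (g : M2)) (𝓝 (x : M2)) := nhds_induced _ x
  rw [hn, Filter.tendsto_comap_iff]
  exact h

lemma exists_ulim (U : Ultrafilter ℕ) {u : ℕ → ℝ} {M : ℝ} (h : ∀ n, |u n| ≤ M) :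
    ∃ l : ℝ, |l| ≤ M ∧ Tendsto u (U : Filter ℕ) (𝓝 l) := by
  have hc : IsCompact (Set.Icc (-M) M) := isCompact_Icc
  have hmem : (U.map u : Filter ℝ) ≤ Filter.principal (Set.Icc (-M) M) := by
    rw [Filter.le_principal_iff]
    exact Filter.mem_map.2 (Filter.univ_mem' (fun n => abs_le.1 (h n)))
  obtain ⟨l, hl, hle⟩ := hc.ultrafilter_le_nhds (U.map u) hmem
  exact ⟨l, abs_le.2 hl, hle⟩

lemma ulim_mat (U : Ultrafilter ℕ) (f : ℕ → M2) {M : ℝ} (h : ∀ n i j, |f n i j| ≤ M) :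
    ∃ A : M2, (∀ i j, |A i j| ≤ M) ∧ (∀ i j, Tendsto (fun n => f n i j) (U : Filter ℕ) (𝓝 (A i j))) := by
  have H : ∀ i j : Fin 2, ∃ l : ℝ, |l| ≤ M ∧ Tendsto (fun n => f n i j) (U : Filter ℕ) (𝓝 l) :=
    fun i j => exists_ulim U (fun n => h n i j)
  choose A hA1 hA2 using H
  exact ⟨Matrix.of A, hA1, hA2⟩

lemma inv_entry_00 (A : SL(2,ℝ)) : ((A⁻¹ : SL(2,ℝ)) : M2) 0 0 = (A : M2) 1 1 := by
  rw [Matrix.SpecialLinearGroup.SL2_inv_expl]; rfl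

lemma inv_entry_01 (A : SL(2,ℝ)) : ((A⁻¹ : SL(2,ℝ)) : M2) 0 1 = -(A : M2) 0 1 := by
  rw [Matrix.SpecialLinearGroup.SL2_inv_expl]; rfl

lemma inv_entry_10 (A : SL(2,ℝ)) : ((A⁻¹ : SL(2,ℝ)) : M2) 1 0 = -(A : M2) 1 0 := by
  rw [Matrix.SpecialLinearGroup.SL2_inv_expl]; rfl

lemma inv_entry_11 (A : SL(2,ℝ)) : ((A⁻¹ : SL(2,ℝ)) : M2) 1 1 = (A : M2) 0 0 := by
  rw [Matrix.SpecialLinearGroup.SL2_inv_expl]; rfl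

lemma mul_entry_00 (A B : SL(2,ℝ)) :
    ((A * B : SL(2,ℝ)) : M2) 0 0 = (A : M2) 0 0 * (B : M2) 0 0 + (A : M2) 0 1 * (B : M2) 1 0 := by
  rw [Matrix.SpecialLinearGroup.coe_mul, Matrix.mul_apply, Fin.sum_univ_two]

lemma mul_entry_10 (A B : SL(2,ℝ)) :
    ((A * B : SL(2,ℝ)) : M2) 1 0 = (A : M2) 1 0 * (B : M2) 0 0 + (A : M2) 1 1 * (B : M2) 1 0 := by
  rw [Matrix.SpecialLinearGroup.coe_mul, Matrix.mul_apply, Fin.sum_univ_two]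

lemma det_entries (A : SL(2,ℝ)) :
    (A : M2) 0 0 * (A : M2) 1 1 - (A : M2) 0 1 * (A : M2) 1 0 = 1 := by
  have := A.prop
  rwa [Matrix.det_fin_two] at this

-- conjugation by diagonal entries
lemma conj_entry_00 (τ t : ℝ) (B : SL(2,ℝ)) :
    ((dMat τ * B * dMat t : SL(2,ℝ)) : M2) 0 0 = Real.exp ((τ + t)/2) * (B : M2) 0 0 := by
  rw [Matrix.SpecialLinearGroup.coe_mul, Matrix.SpecialLinearGroup.coe_mul, dMat_coe, dMat_coe]
  rw [Matrix.mul_apply, Fin.sum_univ_two]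
  simp [Matrix.mul_apply, Fin.sum_univ_two]
  rw [show (τ + t)/2 = τ/2 + t/2 by ring, Real.exp_add]; ring

lemma conj_entry_10 (τ t : ℝ) (B : SL(2,ℝ)) :
    ((dMat τ * B * dMat t : SL(2,ℝ)) : M2) 1 0 = Real.exp ((t - τ)/2) * (B : M2) 1 0 := by
  rw [Matrix.SpecialLinearGroup.coe_mul, Matrix.SpecialLinearGroup.coe_mul, dMat_coe, dMat_coe]
  rw [Matrix.mul_apply, Fin.sum_univ_two]
  simp [Matrix.mul_apply, Fin.sum_univ_two]
  rw [show (t - τ)/2 = -(τ/2) + t/2 by ring, Real.exp_add]; ring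

noncomputable def Pq (Q : M2) (z : ℂ) : ℂ :=
  (Q 1 0 : ℝ) * z^2 + ((Q 1 1 : ℝ) - (Q 0 0 : ℝ)) * z - (Q 0 1 : ℝ)

noncomputable def Fq (Q : M2) (z : ℍ) : ℝ := ‖Pq Q (z : ℂ)‖ / (2 * z.im)

lemma smul_coe_eq (q : SL(2,ℝ)) (z : ℍ) :
    ((q • z : ℍ) : ℂ) = (((q : M2) 0 0 : ℝ) * (z:ℂ) + ((q : M2) 0 1 : ℝ)) /
      (((q : M2) 1 0 : ℝ) * (z:ℂ) + ((q : M2) 1 1 : ℝ)) := by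
  rw [UpperHalfPlane.specialLinearGroup_apply]
  simp [UpperHalfPlane.coe_mk]

lemma denom_ne_zero' (q : SL(2,ℝ)) (z : ℍ) :
    (((q : M2) 1 0 : ℝ) * (z:ℂ) + ((q : M2) 1 1 : ℝ)) ≠ 0 := by
  have h := det_entries q
  have : (![(q : M2) 1 0, (q : M2) 1 1] : Fin 2 → ℝ) ≠ 0 := by
    intro h0
    have h1 : (q : M2) 1 0 = 0 := congrFun h0 0
    have h2 : (q : M2) 1 1 = 0 := congrFun h0 1
    rw [h1, h2] at h; norm_num at h
  simpa using UpperHalfPlane.linear_ne_zero z this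

lemma dist_formula (q : SL(2,ℝ)) (z : ℍ) :
    dist z (q • z) = 2 * Real.arsinh (Fq (q : M2) z) := by
  set a := (q : M2) 0 0
  set b := (q : M2) 0 1
  set c := (q : M2) 1 0
  set d := (q : M2) 1 1
  set w : ℍ := q • z with hwdef
  have hδ : ((c : ℂ) * (z:ℂ) + (d : ℂ)) ≠ 0 := denom_ne_zero' q z
  have hw : (w : ℂ) = ((a:ℂ) * z + b) / ((c:ℂ) * z + d) := smul_coe_eq q z
  have hprod : ((c:ℂ) * z + d) * (w : ℂ) = (a:ℂ) * z + b := by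
    rw [hw]; field_simp
  -- imaginary part of w
  have him : w.im * Complex.normSq ((c:ℂ) * z + d) = z.im := by
    have h1 := congrArg Complex.im hprod
    have h2 := congrArg Complex.re hprod
    have hdet : a * d - b * c = 1 := det_entries q
    simp only [Complex.add_im, Complex.add_re, Complex.mul_im, Complex.mul_re,
      Complex.ofReal_re, Complex.ofReal_im, UpperHalfPlane.coe_im, UpperHalfPlane.coe_re] at h1 h2
    simp only [Complex.normSq_apply, Complex.add_re, Complex.add_im, Complex.mul_re,
      Complex.mul_im, Complex.ofReal_re, Complex.ofReal_im, UpperHalfPlane.coe_im,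
      UpperHalfPlane.coe_re]
    linear_combination (c*z.re + d) * h1 - (c*z.im) * h2 + z.im * hdet
  -- distance in ℂ
  have habs : ‖(c:ℂ) * z + d‖ * dist (z : ℂ) (w : ℂ) = ‖Pq (q : M2) (z:ℂ)‖ := by
    rw [Complex.dist_eq, ← norm_mul]
    congr 1
    have : ((c:ℂ) * z + d) * ((z:ℂ) - w) = ((c:ℂ) * z + d) * z - ((a:ℂ)*z + b) := by
      rw [mul_sub, hprod]
    rw [this, Pq]
    ring
  have habsδ : ‖(c:ℂ) * z + d‖ > 0 := by
    exact norm_pos_iff.2 hδ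
  have him2 : w.im = z.im / (‖(c:ℂ)*z + d‖)^2 := by
    rw [← Complex.sq_norm] at him
    field_simp at him ⊢
    linarith [him]
  have hsqrt : Real.sqrt (z.im * w.im) = z.im / ‖(c:ℂ)*z + d‖ := by
    rw [him2]
    rw [show z.im * (z.im / (‖(c:ℂ)*z + d‖)^2) = (z.im / ‖(c:ℂ)*z + d‖)^2 by
      field_simp]
    exact Real.sqrt_sq (by positivity)
  rw [UpperHalfPlane.dist_eq, hsqrt, Fq]
  congr 2
  have hzim : 0 < z.im := z.im_pos
  rw [← habs]
  field_simp

noncomputable def EB (D : ℝ) : ℝ :=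
  Real.exp (D/2) * (2 * Real.exp (D/2) * Real.sinh (D/2) + Real.exp D)

set_option maxHeartbeats 1000000 in
lemma entry_bound {D : ℝ} (q : SL(2,ℝ)) (hq : dist UpperHalfPlane.I (q • UpperHalfPlane.I) ≤ D) :
    ∀ i j, |(q : M2) i j| ≤ EB D := by
  have hD0 : 0 ≤ D := le_trans dist_nonneg hq
  have hsinh0 : 0 ≤ Real.sinh (D/2) := by
    rw [← Real.sinh_zero]
    exact Real.sinh_le_sinh.2 (by linarith)
  set w : ℍ := q • UpperHalfPlane.I with hwdef
  have hy0 : 0 < w.im := w.im_pos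
  -- bounds on the imaginary part
  have hlog : |Real.log w.im| ≤ D := by
    have h := UpperHalfPlane.dist_log_im_le UpperHalfPlane.I w
    rw [UpperHalfPlane.I_im, Real.log_one, Real.dist_eq, zero_sub, abs_neg] at h
    exact h.trans hq
  have hy_up : w.im ≤ Real.exp D := by
    have h1 : Real.log w.im ≤ D := (abs_le.1 hlog).2
    calc w.im = Real.exp (Real.log w.im) := (Real.exp_log hy0).symm
    _ ≤ Real.exp D := Real.exp_le_exp.2 h1
  have hy_lo : Real.exp (-D) ≤ w.im := by
    have h1 : -D ≤ Real.log w.im := (abs_le.1 hlog).1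
    calc Real.exp (-D) ≤ Real.exp (Real.log w.im) := Real.exp_le_exp.2 h1
    _ = w.im := Real.exp_log hy0
  have hexphalf : Real.exp (D/2) * Real.exp (D/2) = Real.exp D := by
    rw [← Real.exp_add]; norm_num
  have hsqrt_exp : Real.sqrt (Real.exp D) = Real.exp (D/2) := by
    rw [show Real.exp D = (Real.exp (D/2))^2 by rw [sq]; exact hexphalf.symm]
    exact Real.sqrt_sq (Real.exp_pos _).le
  -- bound on complex distance
  have hdist2 : dist (UpperHalfPlane.I : ℂ) (w : ℂ) ≤ 2 * Real.exp (D/2) * Real.sinh (D/2) := by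
    have hde := UpperHalfPlane.dist_eq UpperHalfPlane.I w
    rw [hde] at hq
    have h1 : Real.arsinh (dist (UpperHalfPlane.I : ℂ) (w:ℂ) / (2 * Real.sqrt (UpperHalfPlane.I.im * w.im))) ≤ D/2 := by
      linarith
    have h2 : dist (UpperHalfPlane.I : ℂ) (w:ℂ) / (2 * Real.sqrt (UpperHalfPlane.I.im * w.im)) ≤ Real.sinh (D/2) := by
      calc dist (UpperHalfPlane.I : ℂ) (w:ℂ) / (2 * Real.sqrt (UpperHalfPlane.I.im * w.im))
          = Real.sinh (Real.arsinh (dist (UpperHalfPlane.I : ℂ) (w:ℂ) / (2 * Real.sqrt (UpperHalfPlane.I.im * w.im)))) := (Real.sinh_arsinh _).symm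
      _ ≤ Real.sinh (D/2) := Real.sinh_le_sinh.2 h1
    rw [UpperHalfPlane.I_im, one_mul] at h2
    have hsq0 : 0 < Real.sqrt w.im := Real.sqrt_pos.2 hy0
    have hsqle : Real.sqrt w.im ≤ Real.exp (D/2) := by
      rw [← hsqrt_exp]
      exact Real.sqrt_le_sqrt hy_up
    have h3 := (div_le_iff₀ (by positivity : (0:ℝ) < 2 * Real.sqrt w.im)).1 h2
    have h4 : Real.sinh (D/2) * (2 * Real.sqrt w.im) ≤ Real.sinh (D/2) * (2 * Real.exp (D/2)) :=
      mul_le_mul_of_nonneg_left (by linarith) hsinh0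
    calc dist (UpperHalfPlane.I : ℂ) (w:ℂ) ≤ Real.sinh (D/2) * (2 * Real.sqrt w.im) := h3
    _ ≤ Real.sinh (D/2) * (2 * Real.exp (D/2)) := h4
    _ = 2 * Real.exp (D/2) * Real.sinh (D/2) := by ring
  have hx : |w.re| ≤ 2 * Real.exp (D/2) * Real.sinh (D/2) := by
    have h1 : |((w:ℂ) - (UpperHalfPlane.I : ℂ)).re| ≤ ‖(w:ℂ) - (UpperHalfPlane.I : ℂ)‖ :=
      Complex.abs_re_le_norm _
    rw [Complex.sub_re, UpperHalfPlane.coe_re] at h1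
    rw [UpperHalfPlane.coe_I, Complex.I_re, sub_zero] at h1
    rw [dist_comm, Complex.dist_eq, UpperHalfPlane.coe_I] at hdist2
    exact h1.trans hdist2
  -- the entry equations
  set a := (q : M2) 0 0
  set b := (q : M2) 0 1
  set c := (q : M2) 1 0
  set d := (q : M2) 1 1
  have hδ : ((c : ℂ) * Complex.I + (d:ℂ)) ≠ 0 := by
    have := denom_ne_zero' q UpperHalfPlane.I
    rwa [UpperHalfPlane.coe_I] at this
  have hprod : ((c:ℂ) * Complex.I + d) * (w : ℂ) = (a:ℂ) * Complex.I + b := by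
    have hw : (w : ℂ) = ((a:ℂ) * Complex.I + b) / ((c:ℂ) * Complex.I + d) := by
      have := smul_coe_eq q UpperHalfPlane.I
      rwa [UpperHalfPlane.coe_I] at this
    rw [hw]; field_simp
  have hδre : ((c:ℂ) * Complex.I + (d:ℂ)).re = d := by simp
  have hδim : ((c:ℂ) * Complex.I + (d:ℂ)).im = c := by simp
  have e_a : d * w.im + c * w.re = a := by
    have h1 := congrArg Complex.im hprod
    rw [Complex.mul_im, hδre, hδim] at h1
    simp only [Complex.add_im, Complex.mul_im, Complex.ofReal_re, Complex.ofReal_im,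
      Complex.I_re, Complex.I_im, UpperHalfPlane.coe_im, UpperHalfPlane.coe_re] at h1
    linarith [h1]
  have e_b : d * w.re - c * w.im = b := by
    have h2 := congrArg Complex.re hprod
    rw [Complex.mul_re, hδre, hδim] at h2
    simp only [Complex.add_re, Complex.mul_re, Complex.ofReal_re, Complex.ofReal_im,
      Complex.I_re, Complex.I_im, UpperHalfPlane.coe_im, UpperHalfPlane.coe_re] at h2
    linarith [h2]
  have hdet : a * d - b * c = 1 := det_entries q
  have hcd : w.im * (c^2 + d^2) = 1 := by linear_combination d * e_a - c * e_b + hdet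
  have hcd2 : c^2 + d^2 ≤ Real.exp D := by
    have hep : 0 < Real.exp (-D) := Real.exp_pos _
    have hee : Real.exp (-D) * Real.exp D = 1 := by rw [← Real.exp_add]; simp
    nlinarith [sq_nonneg c, sq_nonneg d]
  have hc : |c| ≤ Real.exp (D/2) := by
    nlinarith [sq_abs c, sq_nonneg d, abs_nonneg c, Real.exp_pos (D/2)]
  have hd : |d| ≤ Real.exp (D/2) := by
    nlinarith [sq_abs d, sq_nonneg c, abs_nonneg d, Real.exp_pos (D/2)]
  have hEB1 : Real.exp (D/2) ≤ EB D := by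
    have h1 : (1:ℝ) ≤ Real.exp D := by
      rw [← Real.exp_zero]; exact Real.exp_le_exp.2 hD0
    have := Real.exp_pos (D/2)
    rw [EB]; nlinarith
  have ha : |a| ≤ EB D := by
    rw [← e_a, EB]
    calc |d * w.im + c * w.re| ≤ |d| * w.im + |c| * |w.re| := by
          calc |d * w.im + c * w.re| ≤ |d * w.im| + |c * w.re| := abs_add_le _ _
          _ = |d| * w.im + |c| * |w.re| := by rw [abs_mul, abs_mul, abs_of_pos hy0]
    _ ≤ Real.exp (D/2) * (2 * Real.exp (D/2) * Real.sinh (D/2) + Real.exp D) := by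
          have h5 : |d| * w.im ≤ Real.exp (D/2) * Real.exp D :=
            mul_le_mul hd hy_up hy0.le (Real.exp_pos _).le
          have h6 : |c| * |w.re| ≤ Real.exp (D/2) * (2 * Real.exp (D/2) * Real.sinh (D/2)) :=
            mul_le_mul hc hx (abs_nonneg _) (Real.exp_pos _).le
          linarith
  have hb : |b| ≤ EB D := by
    rw [← e_b, EB]
    calc |d * w.re - c * w.im| ≤ |d| * |w.re| + |c| * w.im := by
          calc |d * w.re - c * w.im| ≤ |d * w.re| + |c * w.im| := by simpa [sub_eq_add_neg, abs_neg] using abs_add_le (d * w.re) (-(c * w.im))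
          _ = |d| * |w.re| + |c| * w.im := by rw [abs_mul, abs_mul, abs_of_pos hy0]
    _ ≤ Real.exp (D/2) * (2 * Real.exp (D/2) * Real.sinh (D/2) + Real.exp D) := by
          have h5 : |c| * w.im ≤ Real.exp (D/2) * Real.exp D :=
            mul_le_mul hc hy_up hy0.le (Real.exp_pos _).le
          have h6 : |d| * |w.re| ≤ Real.exp (D/2) * (2 * Real.exp (D/2) * Real.sinh (D/2)) :=
            mul_le_mul hd hx (abs_nonneg _) (Real.exp_pos _).le
          linarith
  intro i j
  fin_cases i <;> fin_cases j
  · exact ha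
  · exact hb
  · exact hc.trans hEB1
  · exact hd.trans hEB1

lemma Pq_eval (Q : M2) (x y : ℝ) :
    Pq Q (⟨x, y⟩ : ℂ) = ⟨Q 1 0 * (x^2 - y^2) + (Q 1 1 - Q 0 0) * x - Q 0 1,
      Q 1 0 * (2*x*y) + (Q 1 1 - Q 0 0) * y⟩ := by
  rw [Pq]
  apply Complex.ext
  · simp only [Complex.add_re, Complex.sub_re, Complex.mul_re, Complex.add_im, Complex.sub_im,
      Complex.mul_im, Complex.ofReal_re, Complex.ofReal_im, pow_two]
    ring
  · simp only [Complex.add_re, Complex.sub_re, Complex.mul_re, Complex.add_im, Complex.sub_im,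
      Complex.mul_im, Complex.ofReal_re, Complex.ofReal_im, pow_two]
    ring

lemma abs_real_mk (u : ℝ) : ‖(⟨u, 0⟩ : ℂ)‖ = |u| := by
  have : (⟨u, 0⟩ : ℂ) = (u : ℂ) := by apply Complex.ext <;> simp
  rw [this, Complex.norm_real, Real.norm_eq_abs]

lemma trace_lemma {s : ℝ} (hs : 0 < s) {Q : M2}
    (hdet : Q 0 0 * Q 1 1 - Q 0 1 * Q 1 0 = 1)
    (hF : ∀ z : ℍ, s ≤ Fq Q z) : 4 < (Q 0 0 + Q 1 1)^2 := by
  by_contra hcon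
  push_neg at hcon
  set a := Q 0 0 with hadef
  set b := Q 0 1 with hbdef
  set c := Q 1 0 with hcdef
  set d := Q 1 1 with hddef
  by_cases hc : c = 0
  · have had : a * d = 1 := by
      have h := hdet; rw [hc] at h; linarith
    have haed : a = d := by
      have h0 : (a - d)^2 ≤ 0 := by nlinarith
      have h1 : (a - d)^2 = 0 := le_antisymm h0 (sq_nonneg _)
      have h2 := pow_eq_zero_iff (n := 2) (by norm_num) |>.1 h1
      linarith
    set y : ℝ := |b| / (2*s) + 1 with hy
    have hy0 : 0 < y := by positivity
    set z : ℍ := UpperHalfPlane.mk ⟨0, y⟩ hy0 with hz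
    have hP : Pq Q (z : ℂ) = ⟨-b, 0⟩ := by
      show Pq Q (⟨0, y⟩ : ℂ) = _
      rw [Pq_eval]
      apply Complex.ext
      · show c * (0^2 - y^2) + (d - a) * 0 - b = -b
        rw [hc]; ring
      · show c * (2*0*y) + (d - a) * y = 0
        rw [hc, haed]; ring
    have hFz : Fq Q z = |b| / (2*y) := by
      rw [Fq, hP, abs_real_mk, abs_neg, show z.im = y from rfl]
    have hle := hF z
    rw [hFz] at hle
    have key : s * (2*y) = |b| + 2*s := by
      rw [hy]; field_simp
    have h2 : s * (2*y) ≤ |b| := (le_div_iff₀ (by positivity)).1 hle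
    linarith
  · set x₀ : ℝ := (a - d) / (2*c) with hx₀
    have hcabs : (0:ℝ) < |c| := abs_pos.2 hc
    have hc2 : (0:ℝ) < c^2 := by positivity
    have hx2 : x₀^2 = (a-d)^2/(4*c^2) := by rw [hx₀, div_pow]; ring_nf
    have him0 : ∀ Y : ℝ, c * (2*x₀*Y) + (d - a) * Y = 0 := by
      intro Y
      rw [hx₀]
      field_simp
      ring
    by_cases hk : (a+d)^2 = 4
    · set ε : ℝ := s / |c| with hε
      have hε0 : 0 < ε := div_pos hs hcabs
      set z : ℍ := UpperHalfPlane.mk ⟨x₀, ε⟩ hε0 with hz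
      have h1 : (a - d)^2 + 4 * (b*c) = 0 := by linear_combination hk - 4*hdet
      have hP : Pq Q (z : ℂ) = ⟨-(c*ε^2), 0⟩ := by
        show Pq Q (⟨x₀, ε⟩ : ℂ) = _
        rw [Pq_eval]
        apply Complex.ext
        · show c * (x₀^2 - ε^2) + (d - a) * x₀ - b = -(c*ε^2)
          have key : (4*c^2) * (c * (x₀^2 - ε^2) + (d - a) * x₀ - b + (c*ε^2)) = 0 := by
            rw [hx2, hx₀]
            field_simp
            linear_combination (2*c^2)*hk - (8*c^2)*hdet + (-2*c^2-2*c)*h1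
          have h4 : (4*c^2 : ℝ) ≠ 0 := by positivity
          have := (mul_eq_zero.1 key).resolve_left h4
          linarith
        · exact him0 ε
      have hFz : Fq Q z = |c| * ε / 2 := by
        rw [Fq, hP, abs_real_mk]
        show |(-(c * ε^2))| / (2 * ε) = _
        rw [abs_neg, abs_mul, abs_of_pos (by positivity : (0:ℝ) < ε^2)]
        rw [show (ε : ℝ)^2 = ε * ε from sq ε]
        field_simp
      have hle := hF z
      rw [hFz, hε] at hle
      have hfix : |c| * (s / |c|) = s := by field_simp
      rw [hfix] at hle
      linarith
    · have hk2 : (a+d)^2 < 4 := lt_of_le_of_ne hcon hk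
      set v : ℝ := Real.sqrt (4 - (a+d)^2) with hv
      have hv0 : 0 < v := Real.sqrt_pos.2 (by linarith)
      have hv2 : v^2 = 4 - (a+d)^2 := Real.sq_sqrt (by linarith)
      set y₀ : ℝ := v / (2*|c|) with hy₀
      have hy₀0 : 0 < y₀ := by positivity
      have hy2 : y₀^2 = v^2/(4*c^2) := by
        rw [hy₀, div_pow, mul_pow, sq_abs]; norm_num
      set z : ℍ := UpperHalfPlane.mk ⟨x₀, y₀⟩ hy₀0 with hz
      have h2 : (a - d)^2 + v^2 + 4 * (b*c) = 0 := by linear_combination hv2 - 4*hdet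
      have hP : Pq Q (z : ℂ) = ⟨0, 0⟩ := by
        show Pq Q (⟨x₀, y₀⟩ : ℂ) = _
        rw [Pq_eval]
        apply Complex.ext
        · show c * (x₀^2 - y₀^2) + (d - a) * x₀ - b = 0
          have key : (4*c^2) * (c * (x₀^2 - y₀^2) + (d - a) * x₀ - b) = 0 := by
            rw [hx2, hy2, hx₀]
            field_simp
            linear_combination (-2*c) * h2
          have h4 : (4*c^2 : ℝ) ≠ 0 := by positivity
          have := (mul_eq_zero.1 key).resolve_left h4
          linarith
        · exact him0 y₀
      have hFz : Fq Q z = 0 := by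
        rw [Fq, hP]
        show ‖(⟨0,0⟩ : ℂ)‖ / _ = 0
        rw [abs_real_mk]
        simp
      have hle := hF z
      rw [hFz] at hle
      linarith


open Filter in
lemma lemB (Γ : Subgroup SL(2,ℝ)) (g₀ : SL(2,ℝ)) (U : Filter ℕ) [U.NeBot]
    (η : ℕ → SL(2,ℝ)) (hmem : ∀ n, ∃ γ ∈ Γ, η n = g₀⁻¹ * γ * g₀)
    {lam : ℝ} (hlam : 1 < lam)
    (h00 : Filter.Tendsto (fun n => ((η n : M2)) 0 0) U (nhds lam))
    (h10 : Filter.Tendsto (fun n => ((η n : M2)) 1 0) U (nhds 0)) :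
    ∃ t₀ > (0:ℝ), g₀ * dMat t₀ ∈ closure (horoSat Γ g₀) := by
  have hlam0 : (0:ℝ) < lam := by linarith
  have hlog : 0 < 2 * Real.log lam := by
    have := Real.log_pos hlam; linarith
  refine ⟨2 * Real.log lam, hlog, ?_⟩
  set t₀ : ℝ := 2 * Real.log lam with ht₀
  set sfun : ℕ → ℝ := fun n => -((η n : M2) 0 1) / ((η n : M2) 0 0) with hsfun
  set x : ℕ → SL(2,ℝ) := fun n => g₀ * η n * uMat (sfun n) with hx
  have hxmem : ∀ n, x n ∈ horoSat Γ g₀ := by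
    intro n
    obtain ⟨γ, hγ, hrep⟩ := hmem n
    refine ⟨γ, hγ, sfun n, ?_⟩
    show g₀ * η n * uMat (sfun n) = γ * g₀ * uMat (sfun n)
    rw [hrep]
    group
  have hev : ∀ᶠ n in U, ((η n : M2) 0 0) ≠ 0 := h00.eventually_ne (ne_of_gt hlam0)
  have hDMcoe : ((dMat t₀ : SL(2,ℝ)) : M2) = !![lam, 0; 0, lam⁻¹] := by
    rw [dMat_coe, show t₀/2 = Real.log lam by rw [ht₀]; ring]
    rw [show -Real.log lam = Real.log lam⁻¹ by rw [Real.log_inv]]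
    rw [Real.exp_log hlam0, Real.exp_log (by positivity)]
  -- entries of η n * uMat (sfun n)
  have he00 : ∀ n, ((η n : M2) * (uMat (sfun n) : M2)) 0 0 = (η n : M2) 0 0 := by
    intro n; rw [uMat_coe, Matrix.mul_apply, Fin.sum_univ_two]; simp
  have he10 : ∀ n, ((η n : M2) * (uMat (sfun n) : M2)) 1 0 = (η n : M2) 1 0 := by
    intro n; rw [uMat_coe, Matrix.mul_apply, Fin.sum_univ_two]; simp
  have he01 : ∀ n, ((η n : M2) * (uMat (sfun n) : M2)) 0 1
      = (η n : M2) 0 0 * sfun n + (η n : M2) 0 1 := by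
    intro n; rw [uMat_coe, Matrix.mul_apply, Fin.sum_univ_two]; simp
  have he11 : ∀ n, ((η n : M2) * (uMat (sfun n) : M2)) 1 1
      = (η n : M2) 1 0 * sfun n + (η n : M2) 1 1 := by
    intro n; rw [uMat_coe, Matrix.mul_apply, Fin.sum_univ_two]; simp
  have e00 : Tendsto (fun n => ((η n : M2) * (uMat (sfun n) : M2)) 0 0) U (nhds lam) := by
    simp only [he00]; exact h00
  have e10 : Tendsto (fun n => ((η n : M2) * (uMat (sfun n) : M2)) 1 0) U (nhds 0) := by
    simp only [he10]; exact h10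
  have e01 : Tendsto (fun n => ((η n : M2) * (uMat (sfun n) : M2)) 0 1) U (nhds 0) := by
    apply Tendsto.congr' (f₁ := fun _ => (0:ℝ))
    · filter_upwards [hev] with n hn
      rw [he01, hsfun]
      field_simp
      ring
    · exact tendsto_const_nhds
  have e11 : Tendsto (fun n => ((η n : M2) * (uMat (sfun n) : M2)) 1 1) U (nhds lam⁻¹) := by
    apply Tendsto.congr' (f₁ := fun n => ((η n : M2) 0 0)⁻¹)
    · filter_upwards [hev] with n hn
      rw [he11, hsfun]
      have hdet := det_entries (η n)
      field_simp
      linear_combination -hdet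
    · exact h00.inv₀ (ne_of_gt hlam0)
  have hinner : Tendsto (fun n => (η n : M2) * (uMat (sfun n) : M2)) U
      (nhds (!![lam, 0; 0, lam⁻¹] : M2)) := by
    apply tendsto_mat
    intro i j
    fin_cases i <;> fin_cases j
    · simpa using e00
    · simpa using e01
    · simpa using e10
    · simpa using e11
  have hT : Tendsto (fun n => ((x n : SL(2,ℝ)) : M2)) U (nhds ((g₀ * dMat t₀ : SL(2,ℝ)) : M2)) := by
    have hcoe : ∀ n, ((x n : SL(2,ℝ)) : M2)
        = (g₀ : M2) * ((η n : M2) * (uMat (sfun n) : M2)) := by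
      intro n
      rw [hx]
      rw [Matrix.SpecialLinearGroup.coe_mul, Matrix.SpecialLinearGroup.coe_mul, Matrix.mul_assoc]
    have htgt : ((g₀ * dMat t₀ : SL(2,ℝ)) : M2) = (g₀ : M2) * (!![lam, 0; 0, lam⁻¹] : M2) := by
      rw [Matrix.SpecialLinearGroup.coe_mul, hDMcoe]
    rw [htgt]
    simp only [hcoe]
    apply tendsto_mat
    intro i j
    have htePt : ((g₀ : M2) * (!![lam, 0; 0, lam⁻¹] : M2)) i j
        = (g₀ : M2) i 0 * (!![lam, 0; 0, lam⁻¹] : M2) 0 j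
          + (g₀ : M2) i 1 * (!![lam, 0; 0, lam⁻¹] : M2) 1 j := by
      rw [Matrix.mul_apply, Fin.sum_univ_two]
    have hteF : ∀ n, ((g₀ : M2) * ((η n : M2) * (uMat (sfun n) : M2))) i j
        = (g₀ : M2) i 0 * ((η n : M2) * (uMat (sfun n) : M2)) 0 j
          + (g₀ : M2) i 1 * ((η n : M2) * (uMat (sfun n) : M2)) 1 j := by
      intro n; rw [Matrix.mul_apply, Fin.sum_univ_two]
    simp only [hteF, htePt]
    have l0 : Tendsto (fun n => ((η n : M2) * (uMat (sfun n) : M2)) 0 j) U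
        (nhds ((!![lam, 0; 0, lam⁻¹] : M2) 0 j)) := by
      fin_cases j
      · simpa using e00
      · simpa using e01
    have l1 : Tendsto (fun n => ((η n : M2) * (uMat (sfun n) : M2)) 1 j) U
        (nhds ((!![lam, 0; 0, lam⁻¹] : M2) 1 j)) := by
      fin_cases j
      · simpa using e10
      · simpa using e11
    exact (l0.const_mul _).add (l1.const_mul _)
  exact mem_closure_of_tendsto (tendsto_sl2 hT) (Filter.Eventually.of_forall hxmem)

open Filter in
lemma subB (Γ : Subgroup SL(2,ℝ)) (g₀ : SL(2,ℝ)) (U : Filter ℕ) [U.NeBot]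
    (hU : U ≤ atTop)
    (δ : ℕ → SL(2,ℝ)) (hδ : ∀ n, δ n ∈ Γ)
    (τ t : ℕ → ℝ) (hsum : ∀ n : ℕ, (2*(n:ℝ)) ≤ τ n + t n)
    (X : ℕ → SL(2,ℝ)) (hXid : ∀ n, g₀⁻¹ * δ n * g₀ = dMat (τ n) * X n * dMat (-(t n)))
    {lam C : ℝ} (hlam : 1 < lam)
    (h00 : Tendsto (fun n => Real.exp ((τ n - t n)/2) * (X n : M2) 0 0) U (nhds lam))
    (hX10 : ∀ n, |(X n : M2) 1 0| ≤ C) :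
    ∃ t₀ > (0:ℝ), g₀ * dMat t₀ ∈ closure (horoSat Γ g₀) := by
  set η : ℕ → SL(2,ℝ) := fun n => g₀⁻¹ * δ n * g₀ with hη
  have hC0 : 0 ≤ C := le_trans (abs_nonneg _) (hX10 0)
  have he00 : ∀ n, (η n : M2) 0 0 = Real.exp ((τ n - t n)/2) * (X n : M2) 0 0 := by
    intro n
    show ((g₀⁻¹ * δ n * g₀ : SL(2,ℝ)) : M2) 0 0 = _
    rw [hXid n, conj_entry_00, sub_eq_add_neg]
  have he10 : ∀ n, (η n : M2) 1 0 = Real.exp (-((τ n + t n)/2)) * (X n : M2) 1 0 := by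
    intro n
    show ((g₀⁻¹ * δ n * g₀ : SL(2,ℝ)) : M2) 1 0 = _
    rw [hXid n, conj_entry_10, show (-(t n) - τ n)/2 = -((τ n + t n)/2) by ring]
  apply lemB Γ g₀ U η (fun n => ⟨δ n, hδ n, rfl⟩) hlam
  · simp only [he00]
    exact h00
  · simp only [he10]
    have hbound : ∀ n : ℕ, ‖Real.exp (-((τ n + t n)/2)) * (X n : M2) 1 0‖
        ≤ C * Real.exp (-(n:ℝ)) := by
      intro n
      rw [Real.norm_eq_abs, abs_mul, abs_of_pos (Real.exp_pos _)]
      have h1 : Real.exp (-((τ n + t n)/2)) ≤ Real.exp (-(n:ℝ)) :=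
        Real.exp_le_exp.2 (by linarith [hsum n])
      calc Real.exp (-((τ n + t n)/2)) * |(X n : M2) 1 0|
          ≤ Real.exp (-(n:ℝ)) * C := by
            apply mul_le_mul h1 (hX10 n) (abs_nonneg _) (Real.exp_pos _).le
      _ = C * Real.exp (-(n:ℝ)) := by ring
    have hzero : Tendsto (fun n : ℕ => C * Real.exp (-(n:ℝ))) atTop (nhds 0) := by
      have h1 : Tendsto (fun n : ℕ => Real.exp (-(n:ℝ))) atTop (nhds 0) :=
        Real.tendsto_exp_atBot.comp (tendsto_neg_atTop_atBot.comp tendsto_natCast_atTop_atTop)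
      simpa using h1.const_mul C
    exact squeeze_zero_norm hbound (hzero.mono_left hU)

open Filter in
lemma subB' (Γ : Subgroup SL(2,ℝ)) (g₀ : SL(2,ℝ)) (U : Filter ℕ) [U.NeBot]
    (hU : U ≤ atTop)
    (δ : ℕ → SL(2,ℝ)) (hδ : ∀ n, δ n ∈ Γ)
    (t : ℕ → ℝ) (hsum : ∀ n : ℕ, (2*(n:ℝ)) ≤ t n + t n)
    (X : ℕ → SL(2,ℝ)) (hXid : ∀ n, g₀⁻¹ * δ n * g₀ = dMat (t n) * X n * dMat (-(t n)))
    (C : ℝ) (hX10 : ∀ n, |(X n : M2) 1 0| ≤ C)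
    {lam : ℝ} (hlam : 1 < lam)
    (h00 : Tendsto (fun n => (X n : M2) 0 0) U (nhds lam)) :
    ∃ t₀ > (0:ℝ), g₀ * dMat t₀ ∈ closure (horoSat Γ g₀) := by
  apply subB Γ g₀ U hU δ hδ t t hsum X hXid hlam ?_ hX10
  exact Filter.Tendsto.congr
    (fun n => (by simp : (X n : M2) 0 0 = Real.exp ((t n - t n)/2) * (X n : M2) 0 0)) h00

open Filter in
lemma caseB (Γ : Subgroup SL(2,ℝ)) {a b : ℝ} (ha : 0 < a)
    (hbg : BoundedGeomBelow Γ a) (g₀ : SL(2,ℝ))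
    (h : ∀ T : ℝ, ∃ t ≥ T, ∃ γ ∈ Γ, γ ≠ 1 ∧ γ ≠ negOne ∧
        dist (ray g₀ t) (γ • ray g₀ t) = transLen γ ∧ transLen γ ≤ b) :
    ∃ t₀ > (0:ℝ), g₀ * dMat t₀ ∈ closure (horoSat Γ g₀) := by
  choose t ht γf hγΓ hγ1 hγn hdeq hlen using fun n : ℕ => h (n:ℝ)
  set p : ℕ → SL(2,ℝ) := fun n => g₀ * dMat (t n) with hp
  set q : ℕ → SL(2,ℝ) := fun n => (p n)⁻¹ * γf n * p n with hq
  have hsmul : ∀ n (z : ℍ), dist z (q n • z) = dist (p n • z) (γf n • (p n • z)) := by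
    intro n z
    have h1 : (p n) • ((q n) • z) = (γf n) • ((p n) • z) := by
      rw [smul_smul, smul_smul]
      congr 1
      show p n * ((p n)⁻¹ * γf n * p n) = γf n * p n
      group
    calc dist z (q n • z) = dist (p n • z) (p n • (q n • z)) := (dist_smul _ _ _).symm
    _ = dist (p n • z) (γf n • (p n • z)) := by rw [h1]
  have hrayp : ∀ n, (p n) • UpperHalfPlane.I = ray g₀ (t n) := fun n => rfl
  have hqb : ∀ n, dist UpperHalfPlane.I (q n • UpperHalfPlane.I) ≤ b := by
    intro n
    rw [hsmul n UpperHalfPlane.I, hrayp n, hdeq n]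
    exact hlen n
  have hFn : ∀ n (z : ℍ), Real.sinh (a/2) ≤ Fq ((q n : SL(2,ℝ)) : M2) z := by
    intro n z
    have h1 : a ≤ dist z (q n • z) := by
      rw [hsmul n z]
      exact hbg (p n • z) (γf n) (hγΓ n) (hγ1 n) (hγn n)
    rw [dist_formula] at h1
    have h2 : a/2 ≤ Real.arsinh (Fq ((q n : SL(2,ℝ)) : M2) z) := by linarith
    calc Real.sinh (a/2) ≤ Real.sinh (Real.arsinh (Fq ((q n : SL(2,ℝ)) : M2) z)) :=
          Real.sinh_le_sinh.2 h2
    _ = Fq ((q n : SL(2,ℝ)) : M2) z := Real.sinh_arsinh _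
  have hqM : ∀ n (i j : Fin 2), |((q n : SL(2,ℝ)) : M2) i j| ≤ EB b :=
    fun n => entry_bound (q n) (hqb n)
  set U : Ultrafilter ℕ := Ultrafilter.of atTop with hUdef
  have hUle : (U : Filter ℕ) ≤ atTop := Ultrafilter.of_le _
  obtain ⟨Q, hQb, hQt⟩ := ulim_mat U (fun n => ((q n : SL(2,ℝ)) : M2)) hqM
  have hdetQ : Q 0 0 * Q 1 1 - Q 0 1 * Q 1 0 = 1 := by
    have h1 : Tendsto (fun n => ((q n : SL(2,ℝ)) : M2) 0 0 * ((q n : SL(2,ℝ)) : M2) 1 1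
        - ((q n : SL(2,ℝ)) : M2) 0 1 * ((q n : SL(2,ℝ)) : M2) 1 0) (U : Filter ℕ)
        (nhds (Q 0 0 * Q 1 1 - Q 0 1 * Q 1 0)) :=
      ((hQt 0 0).mul (hQt 1 1)).sub ((hQt 0 1).mul (hQt 1 0))
    have h2 : (fun n => ((q n : SL(2,ℝ)) : M2) 0 0 * ((q n : SL(2,ℝ)) : M2) 1 1
        - ((q n : SL(2,ℝ)) : M2) 0 1 * ((q n : SL(2,ℝ)) : M2) 1 0) = fun _ => (1:ℝ) :=
      funext fun n => det_entries (q n)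
    rw [h2] at h1
    exact tendsto_nhds_unique h1 tendsto_const_nhds
  have hFQ : ∀ z : ℍ, Real.sinh (a/2) ≤ Fq Q z := by
    intro z
    have t10 : Tendsto (fun n => (((q n : SL(2,ℝ)) : M2) 1 0 : ℂ)) (U : Filter ℕ) (nhds (Q 1 0 : ℂ)) :=
      (Complex.continuous_ofReal.tendsto _).comp (hQt 1 0)
    have t01 : Tendsto (fun n => (((q n : SL(2,ℝ)) : M2) 0 1 : ℂ)) (U : Filter ℕ) (nhds (Q 0 1 : ℂ)) :=
      (Complex.continuous_ofReal.tendsto _).comp (hQt 0 1)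
    have t00 : Tendsto (fun n => (((q n : SL(2,ℝ)) : M2) 0 0 : ℂ)) (U : Filter ℕ) (nhds (Q 0 0 : ℂ)) :=
      (Complex.continuous_ofReal.tendsto _).comp (hQt 0 0)
    have t11 : Tendsto (fun n => (((q n : SL(2,ℝ)) : M2) 1 1 : ℂ)) (U : Filter ℕ) (nhds (Q 1 1 : ℂ)) :=
      (Complex.continuous_ofReal.tendsto _).comp (hQt 1 1)
    have hPt : Tendsto (fun n => Pq ((q n : SL(2,ℝ)) : M2) (z:ℂ)) (U : Filter ℕ)
        (nhds (Pq Q (z:ℂ))) := by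
      simp only [Pq]
      exact ((t10.mul_const _).add ((t11.sub t00).mul_const _)).sub t01
    have hFt : Tendsto (fun n => Fq ((q n : SL(2,ℝ)) : M2) z) (U : Filter ℕ) (nhds (Fq Q z)) := by
      simp only [Fq]
      exact ((continuous_norm.tendsto _).comp hPt).div_const _
    exact ge_of_tendsto hFt (Eventually.of_forall fun n => hFn n z)
  have hs : 0 < Real.sinh (a/2) := by
    rw [← Real.sinh_zero]
    exact Real.sinh_lt_sinh.2 (by linarith)
  have htr : 4 < (Q 0 0 + Q 1 1)^2 := trace_lemma hs hdetQ hFQ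
  have habs : 2 < |Q 0 0 + Q 1 1| := by nlinarith [sq_abs (Q 0 0 + Q 1 1), abs_nonneg (Q 0 0 + Q 1 1)]
  have hτt : ∀ n : ℕ, (2*(n:ℝ)) ≤ t n + t n := by
    intro n; have := ht n; linarith
  have hconj : ∀ n, g₀⁻¹ * γf n * g₀ = dMat (t n) * q n * dMat (-(t n)) := by
    intro n
    rw [show dMat (-(t n)) = (dMat (t n))⁻¹ from (dMat_inv _).symm]
    show g₀⁻¹ * γf n * g₀ = dMat (t n) * ((g₀ * dMat (t n))⁻¹ * γf n * (g₀ * dMat (t n))) * (dMat (t n))⁻¹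
    group
  have hexp0 : ∀ n : ℕ, Real.exp ((t n - t n)/2) = 1 := by
    intro n; simp
  rcases lt_abs.1 habs with htr2 | htr2
  · -- trace > 2
    by_cases h00 : 1 < Q 0 0
    · exact subB' Γ g₀ U hUle γf hγΓ t hτt q hconj (EB b) (fun n => hqM n 1 0) h00 (hQt 0 0)
    · have h11 : 1 < Q 1 1 := by linarith
      refine subB' Γ g₀ U hUle (fun n => (γf n)⁻¹) (fun n => Γ.inv_mem (hγΓ n)) t hτt
        (fun n => (q n)⁻¹) (fun n => ?_) (EB b) (fun n => ?_) h11 ?_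
      · rw [show dMat (-(t n)) = (dMat (t n))⁻¹ from (dMat_inv _).symm]
        show g₀⁻¹ * (γf n)⁻¹ * g₀
          = dMat (t n) * ((g₀ * dMat (t n))⁻¹ * γf n * (g₀ * dMat (t n)))⁻¹ * (dMat (t n))⁻¹
        group
      · show |(((q n)⁻¹ : SL(2,ℝ)) : M2) 1 0| ≤ EB b
        rw [inv_entry_10, abs_neg]
        exact hqM n 1 0
      · have he : ∀ n : ℕ, (((q n)⁻¹ : SL(2,ℝ)) : M2) 0 0 = ((q n : SL(2,ℝ)) : M2) 1 1 :=
          fun n => inv_entry_00 (q n)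
        simp only [he]
        exact hQt 1 1
  · -- trace < -2
    have htrneg : Q 0 0 + Q 1 1 < -2 := by linarith
    have hsum2 : 2 < (Q 0 0 * Q 0 0 + Q 0 1 * Q 1 0) + (Q 1 1 * Q 1 1 + Q 0 1 * Q 1 0) := by
      nlinarith [hdetQ]
    have hsq00 : Tendsto (fun n => ((q n * q n : SL(2,ℝ)) : M2) 0 0) (U : Filter ℕ)
        (nhds (Q 0 0 * Q 0 0 + Q 0 1 * Q 1 0)) := by
      have he : ∀ n : ℕ, ((q n * q n : SL(2,ℝ)) : M2) 0 0
          = ((q n : SL(2,ℝ)) : M2) 0 0 * ((q n : SL(2,ℝ)) : M2) 0 0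
            + ((q n : SL(2,ℝ)) : M2) 0 1 * ((q n : SL(2,ℝ)) : M2) 1 0 :=
        fun n => mul_entry_00 (q n) (q n)
      simp only [he]
      exact ((hQt 0 0).mul (hQt 0 0)).add ((hQt 0 1).mul (hQt 1 0))
    have hsqinv00 : Tendsto (fun n => (((q n)⁻¹ * (q n)⁻¹ : SL(2,ℝ)) : M2) 0 0) (U : Filter ℕ)
        (nhds (Q 1 1 * Q 1 1 + Q 0 1 * Q 1 0)) := by
      have he : ∀ n : ℕ, (((q n)⁻¹ * (q n)⁻¹ : SL(2,ℝ)) : M2) 0 0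
          = ((q n : SL(2,ℝ)) : M2) 1 1 * ((q n : SL(2,ℝ)) : M2) 1 1
            + ((q n : SL(2,ℝ)) : M2) 0 1 * ((q n : SL(2,ℝ)) : M2) 1 0 := by
        intro n
        rw [mul_entry_00, inv_entry_00, inv_entry_01, inv_entry_10]
        ring
      simp only [he]
      exact ((hQt 1 1).mul (hQt 1 1)).add ((hQt 0 1).mul (hQt 1 0))
    have hEB0 : 0 ≤ EB b := le_trans (abs_nonneg _) (hqM 0 0 0)
    have hsq10bound : ∀ n : ℕ, |((q n * q n : SL(2,ℝ)) : M2) 1 0| ≤ 2 * EB b * EB b := by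
      intro n
      rw [mul_entry_10]
      have h1 := hqM n 1 0; have h2 := hqM n 0 0; have h3 := hqM n 1 1
      have e1 := abs_nonneg (((q n : SL(2,ℝ)) : M2) 1 0)
      have e2 := abs_nonneg (((q n : SL(2,ℝ)) : M2) 0 0)
      have e3 := abs_nonneg (((q n : SL(2,ℝ)) : M2) 1 1)
      calc |((q n : SL(2,ℝ)) : M2) 1 0 * ((q n : SL(2,ℝ)) : M2) 0 0
            + ((q n : SL(2,ℝ)) : M2) 1 1 * ((q n : SL(2,ℝ)) : M2) 1 0|
          ≤ |((q n : SL(2,ℝ)) : M2) 1 0 * ((q n : SL(2,ℝ)) : M2) 0 0|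
            + |((q n : SL(2,ℝ)) : M2) 1 1 * ((q n : SL(2,ℝ)) : M2) 1 0| := abs_add_le _ _
      _ = |((q n : SL(2,ℝ)) : M2) 1 0| * |((q n : SL(2,ℝ)) : M2) 0 0|
            + |((q n : SL(2,ℝ)) : M2) 1 1| * |((q n : SL(2,ℝ)) : M2) 1 0| := by
            simp only [abs_mul]
      _ ≤ 2 * EB b * EB b := by nlinarith
    have hsqinv10bound : ∀ n : ℕ, |(((q n)⁻¹ * (q n)⁻¹ : SL(2,ℝ)) : M2) 1 0| ≤ 2 * EB b * EB b := by
      intro n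
      rw [mul_entry_10, inv_entry_10, inv_entry_00, inv_entry_11]
      have h1 := hqM n 1 0; have h2 := hqM n 0 0; have h3 := hqM n 1 1
      have e1 := abs_nonneg (((q n : SL(2,ℝ)) : M2) 1 0)
      have e2 := abs_nonneg (((q n : SL(2,ℝ)) : M2) 0 0)
      have e3 := abs_nonneg (((q n : SL(2,ℝ)) : M2) 1 1)
      calc |-((q n : SL(2,ℝ)) : M2) 1 0 * ((q n : SL(2,ℝ)) : M2) 1 1
            + ((q n : SL(2,ℝ)) : M2) 0 0 * -((q n : SL(2,ℝ)) : M2) 1 0|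
          ≤ |(-((q n : SL(2,ℝ)) : M2) 1 0) * ((q n : SL(2,ℝ)) : M2) 1 1|
            + |((q n : SL(2,ℝ)) : M2) 0 0 * (-((q n : SL(2,ℝ)) : M2) 1 0)| := abs_add_le _ _
      _ = |((q n : SL(2,ℝ)) : M2) 1 0| * |((q n : SL(2,ℝ)) : M2) 1 1|
            + |((q n : SL(2,ℝ)) : M2) 0 0| * |((q n : SL(2,ℝ)) : M2) 1 0| := by
            simp only [abs_mul, abs_neg]
      _ ≤ 2 * EB b * EB b := by nlinarith
    by_cases h00 : 1 < Q 0 0 * Q 0 0 + Q 0 1 * Q 1 0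
    · refine subB' Γ g₀ U hUle (fun n => γf n * γf n) (fun n => Γ.mul_mem (hγΓ n) (hγΓ n)) t hτt
        (fun n => q n * q n) (fun n => ?_) (2 * EB b * EB b) hsq10bound h00 hsq00
      rw [show dMat (-(t n)) = (dMat (t n))⁻¹ from (dMat_inv _).symm]
      show g₀⁻¹ * (γf n * γf n) * g₀
        = dMat (t n) * (((g₀ * dMat (t n))⁻¹ * γf n * (g₀ * dMat (t n)))
          * ((g₀ * dMat (t n))⁻¹ * γf n * (g₀ * dMat (t n)))) * (dMat (t n))⁻¹
      group
    · have h11 : 1 < Q 1 1 * Q 1 1 + Q 0 1 * Q 1 0 := by linarith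
      refine subB' Γ g₀ U hUle (fun n => (γf n)⁻¹ * (γf n)⁻¹)
        (fun n => Γ.mul_mem (Γ.inv_mem (hγΓ n)) (Γ.inv_mem (hγΓ n))) t hτt
        (fun n => (q n)⁻¹ * (q n)⁻¹) (fun n => ?_) (2 * EB b * EB b) hsqinv10bound h11 hsqinv00
      rw [show dMat (-(t n)) = (dMat (t n))⁻¹ from (dMat_inv _).symm]
      show g₀⁻¹ * ((γf n)⁻¹ * (γf n)⁻¹) * g₀
        = dMat (t n) * (((g₀ * dMat (t n))⁻¹ * γf n * (g₀ * dMat (t n)))⁻¹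
          * ((g₀ * dMat (t n))⁻¹ * γf n * (g₀ * dMat (t n)))⁻¹) * (dMat (t n))⁻¹
      group

open Filter in
lemma caseA (Γ : Subgroup SL(2,ℝ)) (g₀ : SL(2,ℝ))
    (h : ∃ K : Set ℍ, IsCompact K ∧ ∀ t ≥ (0:ℝ), ∃ γ ∈ Γ, γ • ray g₀ t ∈ K) :
    ∃ t₀ > (0:ℝ), g₀ * dMat t₀ ∈ closure (horoSat Γ g₀) := by
  obtain ⟨K, hK, hKr⟩ := h
  choose χ hχΓ hχK using fun n : ℕ => hKr (n:ℝ) (Nat.cast_nonneg n)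
  obtain ⟨R, hR⟩ := hK.isBounded.subset_closedBall UpperHalfPlane.I
  set C₀ : ℝ := dist UpperHalfPlane.I ((g₀⁻¹ : SL(2,ℝ)) • UpperHalfPlane.I) with hC₀
  set e : ℕ → SL(2,ℝ) := fun n => g₀⁻¹ * χ n * g₀ * dMat (n:ℝ) with he
  have heb : ∀ n : ℕ, dist UpperHalfPlane.I (e n • UpperHalfPlane.I) ≤ C₀ + R := by
    intro n
    have hsm : e n • UpperHalfPlane.I = g₀⁻¹ • (χ n • ray g₀ (n:ℝ)) := by
      show (g₀⁻¹ * χ n * g₀ * dMat (n:ℝ)) • UpperHalfPlane.I = _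
      rw [ray, smul_smul, smul_smul]
      congr 1
      group
    rw [hsm]
    have h2 : dist (χ n • ray g₀ (n:ℝ)) UpperHalfPlane.I ≤ R :=
      Metric.mem_closedBall.1 (hR (hχK n))
    calc dist UpperHalfPlane.I (g₀⁻¹ • (χ n • ray g₀ (n:ℝ)))
        ≤ dist UpperHalfPlane.I ((g₀⁻¹ : SL(2,ℝ)) • UpperHalfPlane.I)
          + dist ((g₀⁻¹ : SL(2,ℝ)) • UpperHalfPlane.I) (g₀⁻¹ • (χ n • ray g₀ (n:ℝ))) :=
          dist_triangle _ _ _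
    _ = C₀ + dist UpperHalfPlane.I (χ n • ray g₀ (n:ℝ)) := by rw [dist_smul]
    _ ≤ C₀ + R := by rw [dist_comm UpperHalfPlane.I (χ n • ray g₀ (n:ℝ))]; linarith
  have hM : ∀ (n : ℕ) (i j : Fin 2), |(e n : M2) i j| ≤ EB (C₀ + R) :=
    fun n => entry_bound (e n) (heb n)
  set U : Ultrafilter ℕ := Ultrafilter.of atTop with hUdef
  have hUle : (U : Filter ℕ) ≤ atTop := Ultrafilter.of_le _
  have hFa : ∀ Δ : ℕ, ∃ A : M2, (∀ i j, |A i j| ≤ EB (C₀+R)) ∧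
      ∀ i j, Tendsto (fun n => ((e (n+Δ) : SL(2,ℝ)) : M2) i j) (U : Filter ℕ) (nhds (A i j)) :=
    fun Δ => ulim_mat U _ (fun n i j => hM (n+Δ) i j)
  choose F hFb hFt using hFa
  obtain ⟨G, hGb, hGt⟩ := ulim_mat U F (fun Δ i j => hFb Δ i j)
  have hdetF : ∀ Δ, F Δ 0 0 * F Δ 1 1 - F Δ 0 1 * F Δ 1 0 = 1 := by
    intro Δ
    have h1 : Tendsto (fun n => ((e (n+Δ) : SL(2,ℝ)) : M2) 0 0 * ((e (n+Δ) : SL(2,ℝ)) : M2) 1 1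
        - ((e (n+Δ) : SL(2,ℝ)) : M2) 0 1 * ((e (n+Δ) : SL(2,ℝ)) : M2) 1 0) (U : Filter ℕ)
        (nhds (F Δ 0 0 * F Δ 1 1 - F Δ 0 1 * F Δ 1 0)) :=
      ((hFt Δ 0 0).mul (hFt Δ 1 1)).sub ((hFt Δ 0 1).mul (hFt Δ 1 0))
    have h2 : (fun n => ((e (n+Δ) : SL(2,ℝ)) : M2) 0 0 * ((e (n+Δ) : SL(2,ℝ)) : M2) 1 1
        - ((e (n+Δ) : SL(2,ℝ)) : M2) 0 1 * ((e (n+Δ) : SL(2,ℝ)) : M2) 1 0) = fun _ => (1:ℝ) :=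
      funext fun n => det_entries (e (n+Δ))
    rw [h2] at h1
    exact tendsto_nhds_unique h1 tendsto_const_nhds
  have hdetG : G 0 0 * G 1 1 - G 0 1 * G 1 0 = 1 := by
    have h1 : Tendsto (fun Δ => F Δ 0 0 * F Δ 1 1 - F Δ 0 1 * F Δ 1 0) (U : Filter ℕ)
        (nhds (G 0 0 * G 1 1 - G 0 1 * G 1 0)) :=
      ((hGt 0 0).mul (hGt 1 1)).sub ((hGt 0 1).mul (hGt 1 0))
    have h2 : (fun Δ => F Δ 0 0 * F Δ 1 1 - F Δ 0 1 * F Δ 1 0) = fun _ => (1:ℝ) :=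
      funext hdetF
    rw [h2] at h1
    exact tendsto_nhds_unique h1 tendsto_const_nhds
  by_cases hwin : ∃ Δ Δ' : ℕ, Δ < Δ' ∧
      1 < Real.exp (((Δ':ℝ) - (Δ:ℝ))/2) * (F Δ' 1 1 * F Δ 0 0 - F Δ' 0 1 * F Δ 1 0)
  · obtain ⟨Δ, Δ', hlt, hlam⟩ := hwin
    have hsum : ∀ n : ℕ, (2*(n:ℝ)) ≤ ((n+Δ' : ℕ):ℝ) + ((n+Δ : ℕ):ℝ) := by
      intro n; push_cast; linarith [Nat.cast_nonneg (α := ℝ) Δ, Nat.cast_nonneg (α := ℝ) Δ']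
    have hx00 : ∀ n : ℕ, (((e (n+Δ'))⁻¹ * e (n+Δ) : SL(2,ℝ)) : M2) 0 0
        = (e (n+Δ') : M2) 1 1 * (e (n+Δ) : M2) 0 0
          + (-(e (n+Δ') : M2) 0 1) * (e (n+Δ) : M2) 1 0 := by
      intro n
      rw [mul_entry_00, inv_entry_00, inv_entry_01]
    have hx10 : ∀ n : ℕ, (((e (n+Δ'))⁻¹ * e (n+Δ) : SL(2,ℝ)) : M2) 1 0
        = (-(e (n+Δ') : M2) 1 0) * (e (n+Δ) : M2) 0 0
          + (e (n+Δ') : M2) 0 0 * (e (n+Δ) : M2) 1 0 := by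
      intro n
      rw [mul_entry_10, inv_entry_10, inv_entry_11]
    apply subB Γ g₀ U hUle (fun n => (χ (n+Δ'))⁻¹ * χ (n+Δ))
      (fun n => Γ.mul_mem (Γ.inv_mem (hχΓ _)) (hχΓ _))
      (fun n => ((n+Δ' : ℕ):ℝ)) (fun n => ((n+Δ : ℕ):ℝ)) hsum
      (fun n => (e (n+Δ'))⁻¹ * e (n+Δ)) ?_ hlam ?_
      (C := 2 * EB (C₀+R) * EB (C₀+R)) ?_
    · intro n
      rw [show dMat (-((n+Δ : ℕ):ℝ)) = (dMat ((n+Δ : ℕ):ℝ))⁻¹ from (dMat_inv _).symm]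
      show g₀⁻¹ * ((χ (n+Δ'))⁻¹ * χ (n+Δ)) * g₀
        = dMat ((n+Δ' : ℕ):ℝ)
          * ((g₀⁻¹ * χ (n+Δ') * g₀ * dMat ((n+Δ' : ℕ):ℝ))⁻¹
            * (g₀⁻¹ * χ (n+Δ) * g₀ * dMat ((n+Δ : ℕ):ℝ)))
          * (dMat ((n+Δ : ℕ):ℝ))⁻¹
      group
    · have hconst : ∀ n : ℕ, (((n+Δ' : ℕ):ℝ) - ((n+Δ : ℕ):ℝ))/2 = (((Δ':ℝ) - (Δ:ℝ))/2) := by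
        intro n; push_cast; ring
      have hφ : Tendsto (fun n => (((e (n+Δ'))⁻¹ * e (n+Δ) : SL(2,ℝ)) : M2) 0 0) (U : Filter ℕ)
          (nhds (F Δ' 1 1 * F Δ 0 0 + (-(F Δ' 0 1)) * F Δ 1 0)) := by
        simp only [hx00]
        exact ((hFt Δ' 1 1).mul (hFt Δ 0 0)).add (((hFt Δ' 0 1).neg).mul (hFt Δ 1 0))
      have := hφ.const_mul (Real.exp (((Δ':ℝ) - (Δ:ℝ))/2))
      simp only [hconst]
      convert this using 2
      ring
    · intro n
      show |(((e (n+Δ'))⁻¹ * e (n+Δ) : SL(2,ℝ)) : M2) 1 0| ≤ 2 * EB (C₀+R) * EB (C₀+R)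
      rw [hx10 n]
      have h1 := hM (n+Δ') 1 0; have h2 := hM (n+Δ) 0 0
      have h3 := hM (n+Δ') 0 0; have h4 := hM (n+Δ) 1 0
      have e1 := abs_nonneg ((e (n+Δ') : M2) 1 0); have e2 := abs_nonneg ((e (n+Δ) : M2) 0 0)
      have e3 := abs_nonneg ((e (n+Δ') : M2) 0 0); have e4 := abs_nonneg ((e (n+Δ) : M2) 1 0)
      calc |(-(e (n+Δ') : M2) 1 0) * (e (n+Δ) : M2) 0 0
            + (e (n+Δ') : M2) 0 0 * (e (n+Δ) : M2) 1 0|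
          ≤ |(-(e (n+Δ') : M2) 1 0) * (e (n+Δ) : M2) 0 0|
            + |(e (n+Δ') : M2) 0 0 * (e (n+Δ) : M2) 1 0| := abs_add_le _ _
      _ = |(e (n+Δ') : M2) 1 0| * |(e (n+Δ) : M2) 0 0|
            + |(e (n+Δ') : M2) 0 0| * |(e (n+Δ) : M2) 1 0| := by
            simp only [abs_mul, abs_neg]
      _ ≤ 2 * EB (C₀+R) * EB (C₀+R) := by nlinarith
  · exfalso
    push_neg at hwin
    have hexp2 : ∀ Δ : ℕ, Tendsto (fun m : ℕ => Real.exp (((Δ:ℝ) - (m:ℝ))/2)) atTop (nhds 0) := by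
      intro Δ
      have hinner : Tendsto (fun m : ℕ => ((Δ:ℝ) - (m:ℝ))/2) atTop atBot := by
        apply Tendsto.atBot_div_const (by norm_num : (0:ℝ) < 2)
        apply tendsto_atBot_add_const_left
        exact tendsto_neg_atTop_atBot.comp tendsto_natCast_atTop_atTop
      exact Real.tendsto_exp_atBot.comp hinner
    have hstep : ∀ Δ : ℕ, G 1 1 * F Δ 0 0 - G 0 1 * F Δ 1 0 ≤ 0 := by
      intro Δ
      have hT1 : Tendsto (fun Δ' => F Δ' 1 1 * F Δ 0 0 - F Δ' 0 1 * F Δ 1 0) (U : Filter ℕ)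
          (nhds (G 1 1 * F Δ 0 0 - G 0 1 * F Δ 1 0)) :=
        ((hGt 1 1).mul_const _).sub ((hGt 0 1).mul_const _)
      have hT2 : Tendsto (fun Δ' : ℕ => Real.exp (((Δ:ℝ) - (Δ':ℝ))/2)) (U : Filter ℕ) (nhds 0) :=
        (hexp2 Δ).mono_left hUle
      apply le_of_tendsto_of_tendsto hT1 hT2
      have hev : ∀ᶠ Δ' : ℕ in (U : Filter ℕ), Δ < Δ' :=
        hUle (eventually_gt_atTop Δ)
      filter_upwards [hev] with Δ' hΔ'
      have := hwin Δ Δ' hΔ'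
      have hepos : (0:ℝ) < Real.exp (((Δ':ℝ) - (Δ:ℝ))/2) := Real.exp_pos _
      have hee : Real.exp (((Δ':ℝ) - (Δ:ℝ))/2) * Real.exp (((Δ:ℝ) - (Δ':ℝ))/2) = 1 := by
        rw [← Real.exp_add]; ring_nf; exact Real.exp_zero
      calc F Δ' 1 1 * F Δ 0 0 - F Δ' 0 1 * F Δ 1 0
          = (Real.exp (((Δ':ℝ) - (Δ:ℝ))/2) * (F Δ' 1 1 * F Δ 0 0 - F Δ' 0 1 * F Δ 1 0))
            * Real.exp (((Δ:ℝ) - (Δ':ℝ))/2) := by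
            rw [mul_comm (Real.exp (((Δ':ℝ) - (Δ:ℝ))/2)), mul_assoc, hee, mul_one]
      _ ≤ 1 * Real.exp (((Δ:ℝ) - (Δ':ℝ))/2) := by
            apply mul_le_mul_of_nonneg_right this (Real.exp_pos _).le
      _ = Real.exp (((Δ:ℝ) - (Δ':ℝ))/2) := one_mul _
    have hG0 : G 1 1 * G 0 0 - G 0 1 * G 1 0 ≤ 0 := by
      have hT1 : Tendsto (fun Δ => G 1 1 * F Δ 0 0 - G 0 1 * F Δ 1 0) (U : Filter ℕ)
          (nhds (G 1 1 * G 0 0 - G 0 1 * G 1 0)) :=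
        ((hGt 0 0).const_mul _).sub ((hGt 1 0).const_mul _)
      exact le_of_tendsto hT1 (Eventually.of_forall hstep)
    nlinarith [hdetG, hG0]


/-- **Corollary: dichotomy.** If `Γ` has bounded geometry below some `a > 0`
and `Γ\ℍ` is coarsely tame, then for every `g₀` the horocycle orbit of `Γg₀` is dense in
`Γ\SL(2,ℝ)`, or some positive geodesic translate `g₀·d(t₀)` lies in its closure. -/
theorem horocycle_orbit_dichotomy (Γ : Subgroup SL(2, ℝ)) (a : ℝ) (ha : 0 < a)
    (hbg : BoundedGeomBelow Γ a) (hct : CoarselyTame Γ) (g₀ : SL(2, ℝ)) :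
    Dense (horoSat Γ g₀) ∨ ∃ t₀ > (0 : ℝ), g₀ * dMat t₀ ∈ closure (horoSat Γ g₀) := by
  obtain ⟨-, b, hb, hdich⟩ := hct
  rcases hdich g₀ with hA | hB
  · exact Or.inr (caseA Γ g₀ hA)
  · exact Or.inr (caseB Γ ha hbg g₀ hB)
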